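/- Let (X,d) and (Λ,ρ) be compact metric spaces, ω : Λ × X → X continuous, p a Borel probability measure on Λ, and ℙ = p^ℕ on Ω = Λ^ℕ. Assume ω is ℙ-weakly hyperbolic (ℙ(S) = 1). Then for every Borel probability measure ν on X and every continuous function φ : X → ℝ, the sequence of integrals ∫_X φ d(T_p^n ν) is Cauchy, where T_p is the transfer operator T_p(μ)(B) = ∫_Λ μ(ω_λ^{-1}(B)) dp(λ). Consequently T_p^n(ν) converges in the weak* topology to a Borel probability measure μ on X. -/

import Mathlib

open Metric Set Filter MeasureTheory

set_option linter.unusedSectionVars false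
set_option linter.unusedVariables false
set_option maxHeartbeats 1000000

def hcomp {Λ X : Type*} (ω : Λ → X → X) (σ : ℕ → Λ) : ℕ → X → X
  | 0 => id
  | n + 1 => hcomp ω σ n ∘ ω (σ n)

def IsBernoulli {Λ : Type*} [MeasurableSpace Λ]
    (p : Measure Λ) (P : Measure (ℕ → Λ)) : Prop :=
  IsProbabilityMeasure P ∧
    ∀ (n : ℕ) (A : ℕ → Set Λ), (∀ i, MeasurableSet (A i)) →
      P {σ | ∀ i < n, σ i ∈ A i} = ∏ i ∈ Finset.range n, p (A i)

def Sset {Λ X : Type*} [MetricSpace X] (ω : Λ → X → X) : Set (ℕ → Λ) :=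
  {σ | Tendsto (fun n => Metric.diam (Set.range (hcomp ω σ n))) atTop (nhds 0)}

section Aux

variable {X Λ : Type*} [MetricSpace X] [CompactSpace X]
    [MeasurableSpace X] [BorelSpace X]
    [MetricSpace Λ] [CompactSpace Λ] [MeasurableSpace Λ] [BorelSpace Λ]

/-- finite-composition version of `hcomp` indexed by `Fin n`. -/
def hcFin (ω : Λ → X → X) : ∀ n : ℕ, (Fin n → Λ) → X → X
  | 0, _ => id
  | n + 1, τ => hcFin ω n (fun i => τ i.castSucc) ∘ ω (τ (Fin.last n))

lemma hcFin_succ (ω : Λ → X → X) (n : ℕ) (τ : Fin (n+1) → Λ) (x : X) :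
    hcFin ω (n+1) τ x = hcFin ω n (fun i => τ i.castSucc) (ω (τ (Fin.last n)) x) := rfl

lemma hcFin_eq_hcomp (ω : Λ → X → X) (σ : ℕ → Λ) :
    ∀ n, hcFin ω n (fun i : Fin n => σ i) = hcomp ω σ n := by
  intro n
  induction n with
  | zero => rfl
  | succ n ih =>
    funext x
    show hcFin ω n (fun i : Fin n => σ i.castSucc) (ω (σ n) x) = hcomp ω σ n (ω (σ n) x)
    simp only [Fin.coe_castSucc, ih]

lemma hcFin_continuous (ω : Λ → X → X) (hω : Continuous fun q : Λ × X => ω q.1 q.2) :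
    ∀ n, Continuous fun q : (Fin n → Λ) × X => hcFin ω n q.1 q.2 := by
  intro n
  induction n with
  | zero => exact continuous_snd
  | succ n ih =>
    have h1 : Continuous fun q : (Fin (n+1) → Λ) × X =>
        ((fun i : Fin n => q.1 i.castSucc), ω (q.1 (Fin.last n)) q.2) := by
      have hfst : Continuous fun q : (Fin (n+1) → Λ) × X => q.1 := continuous_fst
      refine Continuous.prodMk ?_ ?_
      · exact continuous_pi fun i => (continuous_apply (i.castSucc : Fin (n+1))).comp hfst
      · exact hω.comp (((continuous_apply (Fin.last n)).comp hfst).prodMk continuous_snd)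
    exact ih.comp h1

lemma hcomp_continuous (ω : Λ → X → X) (hω : Continuous fun q : Λ × X => ω q.1 q.2) (n : ℕ) :
    Continuous fun q : (ℕ → Λ) × X => hcomp ω q.1 n q.2 := by
  have : (fun q : (ℕ → Λ) × X => hcomp ω q.1 n q.2)
      = fun q : (ℕ → Λ) × X => hcFin ω n (fun i : Fin n => q.1 i) q.2 := by
    funext q; rw [hcFin_eq_hcomp]
  rw [this]
  have hfst : Continuous fun q : (ℕ → Λ) × X => q.1 := continuous_fst
  exact (hcFin_continuous ω hω n).comp
    ((continuous_pi fun i : Fin n => (continuous_apply (i : ℕ)).comp hfst).prodMk continuous_snd)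

/-- continuous real functions on compact spaces are integrable -/
lemma cont_integrable {Y : Type*} [TopologicalSpace Y] [CompactSpace Y] [MeasurableSpace Y]
    [OpensMeasurableSpace Y] (f : Y → ℝ) (hf : Continuous f) (μ : Measure Y)
    [IsFiniteMeasure μ] : Integrable f μ := by
  exact (BoundedContinuousFunction.mkOfCompact ⟨f, hf⟩).integrable μ

end Aux

/-- The transfer (Markov) operator `T_p`, defined on probability measures by
`T_p(μ)(B) = ∫_Λ μ(ω_λ⁻¹(B)) dp(λ)`, i.e. as the pushforward of `p × μ` under `ω`. -/
noncomputable def transferOp {X Λ : Type*}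
    [MetricSpace X] [CompactSpace X] [MeasurableSpace X] [BorelSpace X]
    [MetricSpace Λ] [CompactSpace Λ] [MeasurableSpace Λ] [BorelSpace Λ]
    (ω : Λ → X → X) (hω : Continuous fun q : Λ × X => ω q.1 q.2)
    (p : Measure Λ) [IsProbabilityMeasure p]
    (μ : ProbabilityMeasure X) : ProbabilityMeasure X :=
  ⟨(p.prod μ.toMeasure).map (fun q : Λ × X => ω q.1 q.2), by
    have : IsProbabilityMeasure (p.prod μ.toMeasure) := by
      have := μ.2; infer_instance
    exact Measure.isProbabilityMeasure_map hω.measurable.aemeasurable⟩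

section Transfer

variable {X Λ : Type*} [MetricSpace X] [CompactSpace X]
    [MeasurableSpace X] [BorelSpace X]
    [MetricSpace Λ] [CompactSpace Λ] [MeasurableSpace Λ] [BorelSpace Λ]
    (ω : Λ → X → X) (hω : Continuous fun q : Λ × X => ω q.1 q.2)
    (p : Measure Λ) [IsProbabilityMeasure p]

lemma transfer_integral (φ : X → ℝ) (hφ : Continuous φ) (μ : ProbabilityMeasure X) :
    ∫ x, φ x ∂((transferOp ω hω p μ : ProbabilityMeasure X) : Measure X)
      = ∫ l, ∫ x, φ (ω l x) ∂(μ : Measure X) ∂p := by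
  have hcoe : ((transferOp ω hω p μ : ProbabilityMeasure X) : Measure X)
      = (p.prod (μ : Measure X)).map (fun q : Λ × X => ω q.1 q.2) := rfl
  rw [hcoe, integral_map hω.measurable.aemeasurable hφ.aestronglyMeasurable]
  have : IsProbabilityMeasure (μ : Measure X) := μ.2
  exact integral_prod _ (cont_integrable _ (hφ.comp hω) _)

/-- The key identity: testing `T^n ν` against a continuous function equals integrating
the `n`-fold compositions against the product measure. -/
lemma key_identity (φ : X → ℝ) (hφ : Continuous φ) :
    ∀ (n : ℕ) (ν : ProbabilityMeasure X),
    ∫ x, φ x ∂(((transferOp ω hω p)^[n] ν : ProbabilityMeasure X) : Measure X)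
      = ∫ τ, (∫ x, φ (hcFin ω n τ x) ∂(ν : Measure X)) ∂(Measure.pi fun _ : Fin n => p) := by
  intro n
  induction n with
  | zero =>
    intro ν
    simp only [Function.iterate_zero, id_eq]
    have : IsProbabilityMeasure (Measure.pi fun _ : Fin 0 => p) := by infer_instance
    have h0 : ∀ τ : Fin 0 → Λ,
        (∫ x, φ (hcFin ω 0 τ x) ∂(ν : Measure X)) = ∫ x, φ x ∂(ν : Measure X) := fun _ => rfl
    rw [integral_congr_ae (.of_forall h0), integral_const]
    simp
  | succ n ih =>
    intro ν
    have hνp : IsProbabilityMeasure (ν : Measure X) := ν.2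
    set Pn : Measure (Fin n → Λ) := Measure.pi fun _ : Fin n => p with hPn
    have : IsProbabilityMeasure Pn := by infer_instance
    -- the combined integrand
    set g : Λ × (Fin n → Λ) → ℝ :=
      fun q => ∫ x, φ (hcFin ω n q.2 (ω q.1 x)) ∂(ν : Measure X) with hg
    -- integrability of g
    have hgcont : Continuous fun q : (Λ × (Fin n → Λ)) × X =>
        φ (hcFin ω n q.1.2 (ω q.1.1 q.2)) := by
      refine hφ.comp ?_
      refine (hcFin_continuous ω hω n).comp (Continuous.prodMk ?_ ?_)
      · exact (continuous_snd.comp continuous_fst)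
      · exact hω.comp ((continuous_fst.comp continuous_fst).prodMk continuous_snd)
    have hgint : Integrable g (p.prod Pn) := by
      have : Integrable (fun q : (Λ × (Fin n → Λ)) × X => φ (hcFin ω n q.1.2 (ω q.1.1 q.2)))
          ((p.prod Pn).prod (ν : Measure X)) := cont_integrable _ hgcont _
      exact this.integral_prod_left
    rw [Function.iterate_succ_apply, ih (transferOp ω hω p ν)]
    have h1 : ∀ τ : Fin n → Λ,
        ∫ x, φ (hcFin ω n τ x) ∂((transferOp ω hω p ν : ProbabilityMeasure X) : Measure X)
          = ∫ l, g (l, τ) ∂p := by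
      intro τ
      exact transfer_integral ω hω p _ (hφ.comp ((hcFin_continuous ω hω n).comp
        (continuous_const.prodMk continuous_id))) ν
    calc ∫ τ, (∫ x, φ (hcFin ω n τ x)
          ∂((transferOp ω hω p ν : ProbabilityMeasure X) : Measure X)) ∂Pn
        = ∫ τ, ∫ l, g (l, τ) ∂p ∂Pn := integral_congr_ae (.of_forall h1)
      _ = ∫ l, ∫ τ, g (l, τ) ∂Pn ∂p := (integral_integral_swap (f := fun l τ => g (l, τ)) hgint).symm
      _ = ∫ q, g q ∂(p.prod Pn) := (integral_prod g hgint).symm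
      _ = ∫ τ', g ((MeasurableEquiv.piFinSuccAbove (fun _ : Fin (n+1) => Λ) (Fin.last n)) τ')
            ∂(Measure.pi fun _ : Fin (n+1) => p) := by
          exact ((measurePreserving_piFinSuccAbove (fun _ : Fin (n+1) => p)
            (Fin.last n)).integral_comp' g).symm
      _ = ∫ τ', (∫ x, φ (hcFin ω (n+1) τ' x) ∂(ν : Measure X))
            ∂(Measure.pi fun _ : Fin (n+1) => p) := by
          refine integral_congr_ae (.of_forall fun τ' => ?_)
          have he : (MeasurableEquiv.piFinSuccAbove (fun _ : Fin (n+1) => Λ) (Fin.last n)) τ'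
              = (τ' (Fin.last n), fun j => τ' ((Fin.last n).succAbove j)) := rfl
          show g ((MeasurableEquiv.piFinSuccAbove (fun _ : Fin (n+1) => Λ) (Fin.last n)) τ')
            = ∫ x, φ (hcFin ω (n+1) τ' x) ∂(ν : Measure X)
          rw [he, hg]
          refine integral_congr_ae (.of_forall fun x => ?_)
          show φ (hcFin ω n (fun j => τ' ((Fin.last n).succAbove j)) (ω (τ' (Fin.last n)) x))
            = φ (hcFin ω (n+1) τ' x)
          rw [hcFin_succ]
          have : (fun j : Fin n => τ' ((Fin.last n).succAbove j))
              = fun i : Fin n => τ' i.castSucc := by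
            funext j; simp [Fin.succAbove_last]
          rw [this]

end Transfer

section Bern

variable {X Λ : Type*} [MetricSpace X] [CompactSpace X]
    [MeasurableSpace X] [BorelSpace X]
    [MetricSpace Λ] [CompactSpace Λ] [MeasurableSpace Λ] [BorelSpace Λ]
    (ω : Λ → X → X) (hω : Continuous fun q : Λ × X => ω q.1 q.2)
    (p : Measure Λ) [IsProbabilityMeasure p]
    (P : Measure (ℕ → Λ))

lemma proj_measurable (n : ℕ) : Measurable fun (σ : ℕ → Λ) (i : Fin n) => σ i :=
  measurable_pi_lambda _ fun i => measurable_pi_apply _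

lemma map_proj (hP : IsBernoulli p P) (n : ℕ) :
    P.map (fun (σ : ℕ → Λ) (i : Fin n) => σ i) = Measure.pi (fun _ : Fin n => p) := by
  classical
  refine (Measure.pi_eq fun s hs => ?_).symm
  rw [Measure.map_apply (proj_measurable n) (MeasurableSet.univ_pi hs)]
  set A : ℕ → Set Λ := fun i => if h : i < n then s ⟨i, h⟩ else univ with hA
  have hAm : ∀ i, MeasurableSet (A i) := by
    intro i
    by_cases h : i < n
    · simpa [hA, h] using hs ⟨i, h⟩
    · simp [hA, h]
  have hset : (fun (σ : ℕ → Λ) (i : Fin n) => σ i) ⁻¹' (univ.pi s)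
      = {σ : ℕ → Λ | ∀ i < n, σ i ∈ A i} := by
    ext σ
    simp only [mem_preimage, Set.mem_pi, mem_univ, forall_true_left, mem_setOf_eq]
    constructor
    · intro h i hi
      simpa [hA, hi] using h ⟨i, hi⟩
    · intro h i
      simpa [hA, i.isLt] using h i i.isLt
  rw [hset, hP.2 n A hAm]
  rw [← Fin.prod_univ_eq_prod_range (fun i => p (A i)) n]
  refine Finset.prod_congr rfl fun i _ => ?_
  simp [hA, i.isLt]

lemma bern_integral (hω : Continuous fun q : Λ × X => ω q.1 q.2) (hP : IsBernoulli p P) (ν : ProbabilityMeasure X) (φ : X → ℝ) (hφ : Continuous φ) (n : ℕ) :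
    ∫ σ, (∫ x, φ (hcomp ω σ n x) ∂(ν : Measure X)) ∂P
      = ∫ τ, (∫ x, φ (hcFin ω n τ x) ∂(ν : Measure X)) ∂(Measure.pi fun _ : Fin n => p) := by
  have hνp : IsProbabilityMeasure (ν : Measure X) := ν.2
  haveI hPp : IsProbabilityMeasure P := hP.1
  have hint : Integrable (fun τ : Fin n → Λ => ∫ x, φ (hcFin ω n τ x) ∂(ν : Measure X))
      (Measure.pi fun _ : Fin n => p) := by
    have : Integrable (fun q : (Fin n → Λ) × X => φ (hcFin ω n q.1 q.2))
        ((Measure.pi fun _ : Fin n => p).prod (ν : Measure X)) :=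
      cont_integrable _ (hφ.comp (hcFin_continuous ω hω n)) _
    exact this.integral_prod_left
  have h1 : ∀ σ : ℕ → Λ, (∫ x, φ (hcomp ω σ n x) ∂(ν : Measure X))
      = (fun τ : Fin n → Λ => ∫ x, φ (hcFin ω n τ x) ∂(ν : Measure X))
          (fun i : Fin n => σ i) := by
    intro σ; simp only [hcFin_eq_hcomp]
  rw [integral_congr_ae (.of_forall h1), ← map_proj p P hP n,
    integral_map (proj_measurable n).aemeasurable
      (by rw [map_proj p P hP n]; exact hint.1)]

end Bern

section SsetMeas

variable {X Λ : Type*} [MetricSpace X] [CompactSpace X]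
    [MeasurableSpace X] [BorelSpace X]
    [MetricSpace Λ] [CompactSpace Λ] [MeasurableSpace Λ] [BorelSpace Λ]
    (ω : Λ → X → X)

lemma range_hcomp_anti (σ : ℕ → Λ) : Antitone fun n => Set.range (hcomp ω σ n) := by
  refine antitone_nat_of_succ_le fun k => ?_
  have : hcomp ω σ (k+1) = hcomp ω σ k ∘ ω (σ k) := rfl
  rw [this]
  exact Set.range_comp_subset_range _ _

lemma diam_hcomp_anti (σ : ℕ → Λ) :
    Antitone fun n => Metric.diam (Set.range (hcomp ω σ n)) := fun n m h =>
  Metric.diam_mono (range_hcomp_anti ω σ h) ((isCompact_univ.isBounded).subset (subset_univ _))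

lemma ediam_range_eq [Nonempty X] {f : X → X} (hf : Continuous f) :
    EMetric.diam (Set.range f) = ⨆ i : ℕ, ⨆ j : ℕ,
      edist (f (TopologicalSpace.denseSeq X i)) (f (TopologicalSpace.denseSeq X j)) := by
  set u := TopologicalSpace.denseSeq X with hu
  set S := ⨆ i : ℕ, ⨆ j : ℕ, edist (f (u i)) (f (u j)) with hS
  apply le_antisymm
  · have hC : IsClosed {q : X × X | edist (f q.1) (f q.2) ≤ S} :=
      isClosed_le (continuous_edist.comp
        ((hf.comp continuous_fst).prodMk (hf.comp continuous_snd))) continuous_const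
    have hsub : (Set.range u) ×ˢ (Set.range u) ⊆ {q : X × X | edist (f q.1) (f q.2) ≤ S} := by
      rintro ⟨x, y⟩ ⟨⟨i, rfl⟩, ⟨j, rfl⟩⟩
      exact le_iSup₂ (f := fun i j => edist (f (u i)) (f (u j))) i j
    have hdense : Dense ((Set.range u) ×ˢ (Set.range u)) :=
      (TopologicalSpace.denseRange_denseSeq X).prod (TopologicalSpace.denseRange_denseSeq X)
    have hall : ∀ q : X × X, q ∈ {q : X × X | edist (f q.1) (f q.2) ≤ S} := by
      intro q
      have h1 : closure ((Set.range u) ×ˢ (Set.range u))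
          ⊆ {q : X × X | edist (f q.1) (f q.2) ≤ S} := closure_minimal hsub hC
      have h2 : closure ((Set.range u) ×ˢ (Set.range u)) = univ := hdense.closure_eq
      exact h1 (h2 ▸ mem_univ q)
    refine EMetric.diam_le ?_
    rintro x ⟨a, rfl⟩ y ⟨b, rfl⟩
    exact hall (a, b)
  · refine iSup₂_le fun i j => EMetric.edist_le_diam_of_mem (mem_range_self _) (mem_range_self _)

lemma meas_diam [Nonempty X] (hω : Continuous fun q : Λ × X => ω q.1 q.2) (n : ℕ) :
    Measurable fun σ : ℕ → Λ => Metric.diam (Set.range (hcomp ω σ n)) := by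
  set u := TopologicalSpace.denseSeq X with hu
  have hc : ∀ (σ : ℕ → Λ), Continuous fun x => hcomp ω σ n x := fun σ =>
    (hcomp_continuous ω hω n).comp (continuous_const.prodMk continuous_id)
  have hd : (fun σ : ℕ → Λ => Metric.diam (Set.range (hcomp ω σ n)))
      = fun σ => (⨆ i : ℕ, ⨆ j : ℕ,
          edist (hcomp ω σ n (u i)) (hcomp ω σ n (u j))).toReal := by
    funext σ
    rw [Metric.diam]; exact congrArg ENNReal.toReal (ediam_range_eq (f := hcomp ω σ n) (hc σ))
  rw [hd]
  refine ENNReal.measurable_toReal.comp ?_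
  refine Measurable.iSup fun i => Measurable.iSup fun j => ?_
  have hcont : Continuous fun σ : ℕ → Λ =>
      edist (hcomp ω σ n (u i)) (hcomp ω σ n (u j)) := by
    refine continuous_edist.comp (Continuous.prodMk ?_ ?_) <;>
      exact (hcomp_continuous ω hω n).comp (continuous_id.prodMk continuous_const)
  exact hcont.measurable

lemma measurableSet_Sset [Nonempty X] (hω : Continuous fun q : Λ × X => ω q.1 q.2) :
    MeasurableSet (Sset ω : Set (ℕ → Λ)) := by
  have hEq : (Sset ω : Set (ℕ → Λ)) = ⋂ k : ℕ, ⋃ N : ℕ,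
      {σ : ℕ → Λ | Metric.diam (Set.range (hcomp ω σ N)) < 1/(k+1)} := by
    ext σ
    simp only [Sset, mem_setOf_eq, mem_iInter, mem_iUnion]
    constructor
    · intro h k
      have hk : (0:ℝ) < 1/(k+1) := by positivity
      have := (h.eventually_lt_const hk)
      rw [eventually_atTop] at this
      obtain ⟨N, hN⟩ := this
      exact ⟨N, hN N le_rfl⟩
    · intro h
      rw [Metric.tendsto_atTop]
      intro ε hε
      obtain ⟨k, hk⟩ := exists_nat_one_div_lt hε
      obtain ⟨N, hN⟩ := h k
      refine ⟨N, fun n hn => ?_⟩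
      rw [Real.dist_eq, sub_zero, abs_of_nonneg Metric.diam_nonneg]
      exact lt_of_le_of_lt (diam_hcomp_anti ω σ hn) (lt_trans hN hk)
  rw [hEq]
  refine MeasurableSet.iInter fun k => MeasurableSet.iUnion fun N => ?_
  exact measurableSet_lt (meas_diam ω hω N) measurable_const

end SsetMeas

theorem stmt6 {X Λ : Type*} [MetricSpace X] [CompactSpace X]
    [MeasurableSpace X] [BorelSpace X]
    [MetricSpace Λ] [CompactSpace Λ] [MeasurableSpace Λ] [BorelSpace Λ]
    (ω : Λ → X → X) (hω : Continuous fun q : Λ × X => ω q.1 q.2)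
    (p : Measure Λ) [IsProbabilityMeasure p]
    (P : Measure (ℕ → Λ)) (hP : IsBernoulli p P)
    (hS : P (Sset ω) = 1) (ν : ProbabilityMeasure X) :
    (∀ φ : C(X, ℝ), CauchySeq fun n =>
        ∫ x, φ x ∂(((transferOp ω hω p)^[n] ν : ProbabilityMeasure X) : Measure X)) ∧
      ∃ μ : ProbabilityMeasure X,
        Tendsto (fun n => (transferOp ω hω p)^[n] ν) atTop (nhds μ) := by
  haveI hPp : IsProbabilityMeasure P := hP.1
  haveI hνp : IsProbabilityMeasure (ν : Measure X) := ν.2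
  have hXne : Nonempty X := by
    by_contra h
    rw [not_nonempty_iff] at h
    have h1 := hνp.measure_univ
    rw [Set.univ_eq_empty_iff.mpr h, measure_empty] at h1
    exact zero_ne_one h1
  have hbod : ∀ (s : Set X), Bornology.IsBounded s := fun s =>
    (isCompact_univ.isBounded).subset (subset_univ _)
  -- almost every σ is in Sset
  have hSm : MeasurableSet (Sset ω : Set (ℕ → Λ)) := measurableSet_Sset ω hω
  have hae : ∀ᵐ σ ∂P, σ ∈ Sset ω := by
    rw [ae_iff]
    have hc : {σ : ℕ → Λ | ¬ σ ∈ Sset ω} = (Sset ω)ᶜ := rfl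
    rw [hc, measure_compl hSm (measure_ne_top _ _), hS, measure_univ, tsub_self]
  -- construction of the a.e. limit point map
  obtain ⟨x₀⟩ := hXne
  have hexists : ∀ σ, σ ∈ Sset ω → ∃ l, Tendsto (fun n => hcomp ω σ n x₀) atTop (nhds l) := by
    intro σ hσ
    refine cauchySeq_tendsto_of_complete ?_
    refine cauchySeq_of_le_tendsto_0 (fun N => Metric.diam (Set.range (hcomp ω σ N))) ?_ hσ
    intro n m N hn hm
    exact Metric.dist_le_diam_of_mem (hbod _)
      (range_hcomp_anti ω σ hn (mem_range_self x₀))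
      (range_hcomp_anti ω σ hm (mem_range_self x₀))
  obtain ⟨g, hgmeas, hgtend⟩ := measurable_limit_of_tendsto_metrizable_ae
    (f := fun n (σ : ℕ → Λ) => hcomp ω σ n x₀) (μ := P) (L := atTop)
    (fun n => (((hcomp_continuous ω hω n).comp
      (continuous_id.prodMk continuous_const)).measurable).aemeasurable)
    (hae.mono hexists)
  -- main convergence statement
  have main : ∀ (φ : X → ℝ), Continuous φ →
      Tendsto (fun n =>
          ∫ x, φ x ∂(((transferOp ω hω p)^[n] ν : ProbabilityMeasure X) : Measure X))
        atTop (nhds (∫ σ, φ (g σ) ∂P)) := by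
    intro φ hφ
    have hseq : (fun n =>
        ∫ x, φ x ∂(((transferOp ω hω p)^[n] ν : ProbabilityMeasure X) : Measure X))
        = fun n => ∫ σ, (∫ x, φ (hcomp ω σ n x) ∂(ν : Measure X)) ∂P := by
      funext n
      rw [key_identity ω hω p φ hφ n ν, ← bern_integral ω p P hω hP ν φ hφ n]
    rw [hseq]
    set M : ℝ := ‖BoundedContinuousFunction.mkOfCompact (⟨φ, hφ⟩ : C(X, ℝ))‖ with hM
    have hφle : ∀ y : X, ‖φ y‖ ≤ M := fun y =>
      BoundedContinuousFunction.norm_coe_le_norm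
        (BoundedContinuousFunction.mkOfCompact (⟨φ, hφ⟩ : C(X, ℝ))) y
    have hintn : ∀ (n : ℕ) (σ : ℕ → Λ),
        Integrable (fun x => φ (hcomp ω σ n x)) (ν : Measure X) := fun n σ =>
      cont_integrable _ (hφ.comp ((hcomp_continuous ω hω n).comp
        (continuous_const.prodMk continuous_id))) _
    refine tendsto_integral_of_dominated_convergence (bound := fun _ => M) ?_ ?_ ?_ ?_
    · intro n
      have : Integrable (fun q : (ℕ → Λ) × X => φ (hcomp ω q.1 n q.2))
          (P.prod (ν : Measure X)) := cont_integrable _ (hφ.comp (hcomp_continuous ω hω n)) _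
      exact this.integral_prod_left.1
    · exact integrable_const M
    · intro n
      refine Eventually.of_forall fun σ => ?_
      have h := norm_integral_le_of_norm_le_const (μ := (ν : Measure X))
        (f := fun x => φ (hcomp ω σ n x)) (C := M) (.of_forall fun x => hφle _)
      simpa [measure_univ] using h
    · filter_upwards [hae, hgtend] with σ hσ hgt
      rw [Metric.tendsto_atTop]
      intro ε hε
      obtain ⟨δ, hδpos, hδ⟩ := Metric.uniformContinuous_iff.mp
        (CompactSpace.uniformContinuous_of_continuous hφ) (ε/2) (by positivity)
      have h1 : ∀ᶠ n in atTop, Metric.diam (Set.range (hcomp ω σ n)) < δ/2 :=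
        hσ.eventually_lt_const (by positivity)
      have h2 : ∀ᶠ n in atTop, dist (hcomp ω σ n x₀) (g σ) < δ/2 :=
        Metric.tendsto_nhds.mp hgt (δ/2) (by positivity)
      have h12 := h1.and h2
      rw [eventually_atTop] at h12
      obtain ⟨N, hN⟩ := h12
      refine ⟨N, fun n hn => ?_⟩
      obtain ⟨hd1, hd2⟩ := hN n hn
      have hpt : ∀ x : X, ‖φ (hcomp ω σ n x) - φ (g σ)‖ ≤ ε/2 := by
        intro x
        have hdist : dist (hcomp ω σ n x) (g σ) < δ := by
          calc dist (hcomp ω σ n x) (g σ)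
              ≤ dist (hcomp ω σ n x) (hcomp ω σ n x₀) + dist (hcomp ω σ n x₀) (g σ) :=
                dist_triangle _ _ _
            _ < δ/2 + δ/2 := add_lt_add_of_le_of_lt (le_trans
                (Metric.dist_le_diam_of_mem (hbod _) (mem_range_self _) (mem_range_self _))
                (le_of_lt hd1)) hd2
            _ = δ := add_halves δ
        have := hδ hdist
        rw [dist_eq_norm] at this
        exact le_of_lt this
      have hI : dist (∫ x, φ (hcomp ω σ n x) ∂(ν : Measure X)) (φ (g σ)) ≤ ε/2 := by
        rw [dist_eq_norm]
        have heq : (∫ x, φ (hcomp ω σ n x) ∂(ν : Measure X)) - φ (g σ)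
            = ∫ x, (φ (hcomp ω σ n x) - φ (g σ)) ∂(ν : Measure X) := by
          rw [integral_sub (hintn n σ) (integrable_const _), integral_const]
          simp [measure_univ]
        rw [heq]
        have h := norm_integral_le_of_norm_le_const (μ := (ν : Measure X))
          (C := ε/2) (.of_forall hpt)
        simpa [measure_univ] using h
      exact lt_of_le_of_lt hI (by linarith)
  constructor
  · intro φ
    exact (main φ φ.continuous).cauchySeq
  · refine ⟨⟨P.map g, Measure.isProbabilityMeasure_map hgmeas.aemeasurable⟩, ?_⟩
    refine (MeasureTheory.ProbabilityMeasure.tendsto_iff_forall_integral_tendsto).2 ?_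
    intro f
    convert main f f.continuous using 2
    exact integral_map hgmeas.aemeasurable f.continuous.aestronglyMeasurable
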